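/- Let r < 0 and ψ̄² < −r/3, and set α = 1 − 3r − 9ψ̄² (so α > 1). Then the minimal τ > 0 for which 1 + τ[(3ψ̄² + 1 + r)k² − 2k⁴ + k⁶] = 0 has a solution k ≥ 0 is τ* = 27 / (2(√α − 1)(√α + 2)²), and this minimum of the cubic (in s = k²) s³ − 2s² + (3ψ̄² + 1 + r)s is attained at s = 2/3 + √α/3. -/

import Mathlib

theorem stmt_7 (r ψ : ℝ) (hr : r < 0) (hψ : ψ ^ 2 < -r / 3) :
    let α : ℝ := 1 - 3 * r - 9 * ψ ^ 2
    let τs : ℝ := 27 / (2 * (Real.sqrt α - 1) * (Real.sqrt α + 2) ^ 2)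
    let f : ℝ → ℝ := fun s => s ^ 3 - 2 * s ^ 2 + (3 * ψ ^ 2 + 1 + r) * s
    1 < α ∧
    IsLeast {τ : ℝ | 0 < τ ∧
      ∃ k : ℝ, 0 ≤ k ∧
        1 + τ * ((3 * ψ ^ 2 + 1 + r) * k ^ 2 - 2 * k ^ 4 + k ^ 6) = 0} τs ∧
    (∀ s : ℝ, 0 ≤ s → f (2 / 3 + Real.sqrt α / 3) ≤ f s) := by
  intro α τs f
  have hα : 1 < α := by simp only [α]; nlinarith
  set a := Real.sqrt α with ha
  have ha2 : a ^ 2 = α := Real.sq_sqrt (by linarith)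
  have ha0 : 0 ≤ a := Real.sqrt_nonneg α
  have ha1 : 1 < a := by nlinarith
  have hc : 3 * ψ ^ 2 + 1 + r = (4 - a ^ 2) / 3 := by
    rw [ha2]; simp only [α]; ring
  -- the minimum point, written as in the statement
  have hsp : (2 / 3 + a / 3 : ℝ) = (2 + a) / 3 := by ring
  -- value at the minimum
  have hfval : f (2 / 3 + a / 3) = -(2 * (a - 1) * (a + 2) ^ 2) / 27 := by
    simp only [f, hc]; ring
  -- global minimality on [0,∞)
  have hmin : ∀ s : ℝ, 0 ≤ s → f (2 / 3 + a / 3) ≤ f s := by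
    intro s hs
    have key : f s - f (2 / 3 + a / 3)
        = (s - (2 + a) / 3) ^ 2 * (s - (2 - 2 * a) / 3) := by
      simp only [f, hc]; ring
    nlinarith [mul_nonneg (sq_nonneg (s - (2 + a) / 3))
      (show (0:ℝ) ≤ s - (2 - 2 * a) / 3 by linarith)]
  have hD : 0 < 2 * (a - 1) * (a + 2) ^ 2 := by nlinarith
  have hτs : 0 < τs := by
    simp only [τs, ← ha]; exact div_pos (by norm_num) hD
  have hτsf : τs * f (2 / 3 + a / 3) = -1 := by
    rw [hfval]; simp only [τs, ← ha]
    field_simp [show a - 1 ≠ 0 by linarith, show a + 2 ≠ 0 by linarith]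
  refine ⟨hα, ⟨⟨hτs, ?_⟩, ?_⟩, hmin⟩
  · -- membership: take k = sqrt ((2+a)/3)
    refine ⟨Real.sqrt ((2 + a) / 3), Real.sqrt_nonneg _, ?_⟩
    have hk2 : Real.sqrt ((2 + a) / 3) ^ 2 = (2 + a) / 3 :=
      Real.sq_sqrt (by linarith)
    have : (3 * ψ ^ 2 + 1 + r) * Real.sqrt ((2 + a) / 3) ^ 2
        - 2 * Real.sqrt ((2 + a) / 3) ^ 4 + Real.sqrt ((2 + a) / 3) ^ 6
        = f (2 / 3 + a / 3) := by
      simp only [f]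
      rw [show Real.sqrt ((2 + a) / 3) ^ 4 = (Real.sqrt ((2 + a) / 3) ^ 2) ^ 2 by ring,
        show Real.sqrt ((2 + a) / 3) ^ 6 = (Real.sqrt ((2 + a) / 3) ^ 2) ^ 3 by ring,
        hk2]
      ring
    rw [this]
    linarith [hτsf]
  · -- lower bound
    rintro τ ⟨hτ, k, hk, heq⟩
    have hfk : (3 * ψ ^ 2 + 1 + r) * k ^ 2 - 2 * k ^ 4 + k ^ 6 = f (k ^ 2) := by
      simp only [f]; ring
    rw [hfk] at heq
    have h1 : f (2 / 3 + a / 3) ≤ f (k ^ 2) := hmin _ (sq_nonneg k)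
    have h2 : f (2 / 3 + a / 3) < 0 := by
      rw [hfval]
      have : (0:ℝ) < 2 * (a - 1) * (a + 2) ^ 2 := hD
      linarith
    nlinarith [mul_le_mul_of_nonneg_left h1 hτ.le]
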